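/- arXiv:1509.04507 — 5 statements merged into one kernel-verified Lean document; each statement's English description precedes it below -/
import Mathlib

section
/- Let H^MPS_{D,m} ⊆ ((Fin m → Fin d) → ℂ) be the ℂ-linear span of all m-site matrix product states ψ(ω,A,m) with ω ∈ M_D(ℂ) and A : Fin d → M_D(ℂ). With respect to the standard Hermitian inner product, the orthogonal complement of H^MPS_{D,m} equals the set of vectors v : (Fin m → Fin d) → ℂ such that the polynomial with coefficients conj(v) is a matrix polynomial identity for dimension D, i.e., Σ_{j} conj(v(j)) · A_{j_1}⋯A_{j_m} = 0 for all A : Fin d → M_D(ℂ). -/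
open Matrix

/-- The ordered matrix product `A_{i_1} ⋯ A_{i_n}` associated to an index string `i`. -/
noncomputable def mpsProd {d D n : ℕ} (A : Fin d → Matrix (Fin D) (Fin D) ℂ)
    (i : Fin n → Fin d) : Matrix (Fin D) (Fin D) ℂ :=
  ((List.finRange n).map fun t => A (i t)).prod

/-- The matrix product state `ψ(ω,A,n)`, as a vector of `(ℂ^d)^{⊗n}` modeled by
`EuclideanSpace ℂ (Fin n → Fin d)`. -/
noncomputable def mps {d D n : ℕ} (ω : Matrix (Fin D) (Fin D) ℂ)
    (A : Fin d → Matrix (Fin D) (Fin D) ℂ) : EuclideanSpace ℂ (Fin n → Fin d) :=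
  WithLp.toLp 2 fun i => (ω * mpsProd A i).trace


lemma inner_mps {d D m : ℕ} (v : EuclideanSpace ℂ (Fin m → Fin d))
    (ω : Matrix (Fin D) (Fin D) ℂ) (A : Fin d → Matrix (Fin D) (Fin D) ℂ) :
    (inner ℂ v (mps (n := m) ω A) : ℂ)
      = (ω * ∑ j : Fin m → Fin d, (starRingEnd ℂ) (v j) • mpsProd A j).trace := by
  simp [PiLp.inner_apply, mps, Matrix.mul_sum, Matrix.trace_sum, Matrix.mul_smul,
    Matrix.trace_smul, mul_comm, smul_eq_mul]

lemma trace_single_mul {D : ℕ} (M : Matrix (Fin D) (Fin D) ℂ) (a b : Fin D) :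
    (Matrix.single a b 1 * M).trace = M b a := by
  simp [Matrix.trace, Matrix.diag, Matrix.mul_apply, Matrix.single,
    ite_and, Finset.sum_ite_eq, Finset.sum_ite_eq']

/-- The orthogonal complement of the span of matrix product states of bond
dimension `D` is exactly the set of vectors whose conjugated coefficient tensor is a
matrix polynomial identity for dimension `D`. -/
theorem stmt2 (d D m : ℕ) (hd : 0 < d) (hD : 0 < D) :
    ((Submodule.span ℂ (Set.range fun ωA :
        Matrix (Fin D) (Fin D) ℂ × (Fin d → Matrix (Fin D) (Fin D) ℂ) =>
          mps (n := m) ωA.1 ωA.2))ᗮ : Set (EuclideanSpace ℂ (Fin m → Fin d)))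
      = { v : EuclideanSpace ℂ (Fin m → Fin d) |
          ∀ A : Fin d → Matrix (Fin D) (Fin D) ℂ,
            ∑ j : Fin m → Fin d, (starRingEnd ℂ) (v j) • mpsProd A j = 0 } := by
  ext v
  simp only [SetLike.mem_coe, Set.mem_setOf_eq, Submodule.mem_orthogonal']
  constructor
  · intro h A
    ext a b
    have := h (mps (n := m) (Matrix.single b a 1) A)
      (Submodule.subset_span ⟨(Matrix.single b a 1, A), rfl⟩)
    rw [inner_mps, trace_single_mul] at this
    simpa using this
  · intro h u hu
    induction hu using Submodule.span_induction with
    | mem u hu =>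
      obtain ⟨⟨ω, A⟩, rfl⟩ := hu
      rw [inner_mps, h A, Matrix.mul_zero, Matrix.trace_zero]
    | zero => simp
    | add x y _ _ hx hy => rw [inner_add_right, hx, hy, add_zero]
    | smul c x _ hx => rw [inner_smul_right, hx, mul_zero]
end

section
/- Fix D ≥ 1 and let B₁ = Σ_{j=1}^{D} j·E_{jj} ∈ M_D(ℂ) (the diagonal matrix with entries 1,2,…,D) and B₂ = (1/D)·Σ_{i,j=1}^{D} E_{ij} ∈ M_D(ℂ) (the matrix all of whose entries equal 1/D). Then the ℂ-linear span of all products w₁·w₂⋯w_{2D+1}, where each factor w_k ∈ {B₁, B₂}, is all of M_D(ℂ). In particular, the pair (B₁,B₂) satisfies the injectivity condition at order 2D+1. -/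
open Matrix

private lemma ofFn_get_cast' {α : Type*} (l : List α) {n : ℕ} (h : l.length = n) :
    List.ofFn (fun t : Fin n => l.get (Fin.cast h.symm t)) = l := by
  apply List.ext_getElem (by simp [h])
  intro i h1 h2
  simp

/-- The pair `B₁ = diag(1,…,D)`, `B₂ = (1/D)·(all-ones matrix)` satisfies the injectivity
condition at order `2D+1`: the products of length `2D+1` in `B₁, B₂` span all of `M_D(ℂ)`. -/
theorem stmt6 (D : ℕ) (hD : 0 < D) :
    Submodule.span ℂ { M : Matrix (Fin D) (Fin D) ℂ |
        ∃ w : Fin (2 * D + 1) → Fin 2,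
          M = ((List.finRange (2 * D + 1)).map fun t =>
            ![Matrix.diagonal (fun j : Fin D => ((j : ℕ) + 1 : ℂ)),
              Matrix.of (fun _ _ : Fin D => (1 / (D : ℂ)))] (w t)).prod } = ⊤ := by
  have hD0 : (D : ℂ) ≠ 0 := Nat.cast_ne_zero.mpr hD.ne'
  set B1 : Matrix (Fin D) (Fin D) ℂ :=
    Matrix.diagonal (fun j : Fin D => ((j : ℕ) + 1 : ℂ)) with hB1
  set B2 : Matrix (Fin D) (Fin D) ℂ :=
    Matrix.of (fun _ _ : Fin D => (1 / (D : ℂ))) with hB2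
  set f : Fin 2 → Matrix (Fin D) (Fin D) ℂ := ![B1, B2] with hf
  set S : Set (Matrix (Fin D) (Fin D) ℂ) :=
    { M : Matrix (Fin D) (Fin D) ℂ |
        ∃ w : Fin (2 * D + 1) → Fin 2,
          M = ((List.finRange (2 * D + 1)).map fun t => f (w t)).prod } with hS
  -- B2 is idempotent
  have hB2sq : B2 * B2 = B2 := by
    ext i j
    simp [hB2, Matrix.mul_apply]
    field_simp
  have hB2pow : ∀ m : ℕ, 0 < m → B2 ^ m = B2 := by
    intro m hm
    induction m with
    | zero => omega
    | succ n ih =>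
      rcases Nat.eq_zero_or_pos n with h | h
      · simp [h]
      · rw [pow_succ, ih h, hB2sq]
  -- products over any list of length 2D+1 are in S
  have hlist : ∀ l : List (Fin 2), l.length = 2 * D + 1 → (l.map f).prod ∈ S := by
    intro l hl
    refine ⟨fun t => l.get (Fin.cast hl.symm t), ?_⟩
    rw [← List.ofFn_eq_map,
      show (List.ofFn fun t => f (l.get (Fin.cast hl.symm t)))
          = List.map f (List.ofFn fun t => l.get (Fin.cast hl.symm t)) from
        (List.map_ofFn (f := fun t => l.get (Fin.cast hl.symm t)) (g := f)).symm,
      ofFn_get_cast' l hl]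
  -- the matrices M(a,b) = B1^a * B2 * B1^b are in S
  have hmem : ∀ a b : Fin D, B1 ^ (a : ℕ) * B2 * B1 ^ (b : ℕ) ∈ S := by
    intro a b
    have ha : (a : ℕ) < D := a.isLt
    have hb : (b : ℕ) < D := b.isLt
    set m : ℕ := 2 * D + 1 - a - b with hm
    have hmpos : 0 < m := by omega
    have := hlist (List.replicate (a : ℕ) 0 ++ List.replicate m 1 ++ List.replicate (b : ℕ) 0)
      (by simp [hm]; omega)
    simpa [List.map_append, List.map_replicate, List.prod_replicate, hf,
      hB2pow m hmpos, mul_assoc] using this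
  -- Vandermonde setup
  set v : Fin D → ℂ := fun i => ((i : ℕ) + 1 : ℂ) with hv
  set V : Matrix (Fin D) (Fin D) ℂ := Matrix.vandermonde v with hV
  have hvinj : Function.Injective v := by
    intro i j h
    have : ((i : ℕ) : ℂ) = ((j : ℕ) : ℂ) := by
      have := h; simp [hv] at this; exact_mod_cast this
    exact Fin.ext (by exact_mod_cast this)
  have hdet : V.det ≠ 0 := by
    rw [hV, Matrix.det_vandermonde]
    refine Finset.prod_ne_zero_iff.mpr fun i _ => Finset.prod_ne_zero_iff.mpr fun j hj => ?_
    rw [Finset.mem_Ioi] at hj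
    exact sub_ne_zero_of_ne fun h => hj.ne' (hvinj h)
  set W : Matrix (Fin D) (Fin D) ℂ := V⁻¹ with hW
  have hVW : V * W = 1 := Matrix.mul_nonsing_inv V (isUnit_iff_ne_zero.mpr hdet)
  have hid : ∀ k i : Fin D, (∑ a : Fin D, v k ^ (a : ℕ) * W a i) = if k = i then 1 else 0 := by
    intro k i
    have := congrFun (congrFun hVW k) i
    simpa [Matrix.mul_apply, hV, Matrix.vandermonde, Matrix.one_apply] using this
  -- the entries of M(a,b)
  have hentry : ∀ (a b : Fin D) (k l : Fin D),
      (B1 ^ (a : ℕ) * B2 * B1 ^ (b : ℕ)) k l = v k ^ (a : ℕ) * (1 / D) * v l ^ (b : ℕ) := by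
    intro a b k l
    simp only [hB1, Matrix.diagonal_pow, Matrix.mul_diagonal, Matrix.diagonal_mul,
      Pi.pow_apply, hB2, Matrix.of_apply]
  -- each std basis matrix is in the span
  have hstd : ∀ i j : Fin D, Matrix.single i j (1 : ℂ) ∈ Submodule.span ℂ S := by
    intro i j
    have key : Matrix.single i j (1 : ℂ) = ∑ p : Fin D × Fin D,
        ((D : ℂ) * W p.1 i * W p.2 j) • (B1 ^ (p.1 : ℕ) * B2 * B1 ^ (p.2 : ℕ)) := by
      ext k l
      rw [Matrix.sum_apply]
      have : ∀ p : Fin D × Fin D,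
          (((D : ℂ) * W p.1 i * W p.2 j) • (B1 ^ (p.1 : ℕ) * B2 * B1 ^ (p.2 : ℕ))) k l
            = (v k ^ (p.1 : ℕ) * W p.1 i) * (v l ^ (p.2 : ℕ) * W p.2 j) := by
        intro p
        rw [Matrix.smul_apply, hentry p.1 p.2 k l, smul_eq_mul]
        field_simp
      have hps : (∑ a : Fin D, v k ^ (a : ℕ) * W a i) * (∑ b : Fin D, v l ^ (b : ℕ) * W b j)
          = ∑ p : Fin D × Fin D, v k ^ (p.1 : ℕ) * W p.1 i * (v l ^ (p.2 : ℕ) * W p.2 j) := by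
        rw [Fintype.sum_mul_sum, Fintype.sum_prod_type]
      rw [Finset.sum_congr rfl fun p _ => this p, ← hps, hid k i, hid l j]
      have hite : ((if k = i then (1 : ℂ) else 0) * if l = j then 1 else 0)
          = if i = k ∧ j = l then 1 else 0 := by
        by_cases h1 : i = k <;> by_cases h2 : j = l
        · simp [h1, h2]
        · have h2' : ¬ l = j := fun h => h2 h.symm
          simp [h1, h2, h2']
        · have h1' : ¬ k = i := fun h => h1 h.symm
          simp [h1, h1']
        · have h1' : ¬ k = i := fun h => h1 h.symm
          simp [h1, h1']
      rw [hite]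
      simp [Matrix.single]
    rw [key]
    exact Submodule.sum_mem _ fun p _ =>
      Submodule.smul_mem _ _ (Submodule.subset_span (hmem p.1 p.2))
  rw [eq_top_iff]
  intro M _
  rw [matrix_eq_sum_single M]
  refine Submodule.sum_mem _ fun i _ => Submodule.sum_mem _ fun j _ => ?_
  have : Matrix.single i j (M i j) = (M i j) • Matrix.single i j (1 : ℂ) := by
    rw [Matrix.smul_single, smul_eq_mul, mul_one]
  rw [this]
  exact Submodule.smul_mem _ _ (hstd i j)
end

section
/- Let p : (Fin m → Fin d) → ℂ be a homogeneous noncommutative polynomial of degree m in d variables. Then p is central for dimension D (i.e., for every A : Fin d → M_D(ℂ) there is c ∈ ℂ with Σ_j p(j)·A_{j_1}⋯A_{j_m} = c·I) if and only if for every traceless σ ∈ M_D(ℂ) and every A : Fin d → M_D(ℂ) one has Σ_{j : Fin m → Fin d} p(j) · tr(σ · A_{j_1}⋯A_{j_m}) = 0; equivalently, the vector with coefficients conj(p) is orthogonal to the span of all m-site matrix product states ψ(σ,A,m) with traceless boundary condition σ. -/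
open Matrix

lemma trace_std_mul {D : ℕ} (M : Matrix (Fin D) (Fin D) ℂ) (k l : Fin D) :
    (Matrix.single k l (1:ℂ) * M).trace = M l k := by
  simp [Matrix.trace, Matrix.diag, Matrix.mul_apply, Matrix.single, ite_and]

lemma scalar_of_traceless {D : ℕ} (hD : 0 < D) (M : Matrix (Fin D) (Fin D) ℂ)
    (h : ∀ σ : Matrix (Fin D) (Fin D) ℂ, σ.trace = 0 → (σ * M).trace = 0) :
    ∃ c : ℂ, M = c • (1 : Matrix (Fin D) (Fin D) ℂ) := by
  refine ⟨M ⟨0, hD⟩ ⟨0, hD⟩, ?_⟩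
  ext k l
  by_cases hkl : k = l
  · subst hkl
    have hσ : (Matrix.single k k (1:ℂ)
        - Matrix.single (⟨0,hD⟩ : Fin D) (⟨0,hD⟩ : Fin D) (1:ℂ)).trace = 0 := by
      rw [Matrix.trace_sub, Matrix.trace_single_eq_same, Matrix.trace_single_eq_same, sub_self]
    have := h _ hσ
    rw [Matrix.sub_mul, Matrix.trace_sub, trace_std_mul, trace_std_mul] at this
    have : M k k = M ⟨0,hD⟩ ⟨0,hD⟩ := by linear_combination this
    simpa [Matrix.one_apply] using this
  · have hσ : (Matrix.single l k (1:ℂ)).trace = 0 := by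
      exact Matrix.trace_single_eq_of_ne l k 1 (Ne.symm hkl)
    have := h _ hσ
    rw [trace_std_mul] at this
    simpa [Matrix.one_apply, hkl] using this

lemma sum_trace_eq {d D m : ℕ} (p : (Fin m → Fin d) → ℂ)
    (σ : Matrix (Fin D) (Fin D) ℂ) (A : Fin d → Matrix (Fin D) (Fin D) ℂ) :
    ∑ j : Fin m → Fin d, p j * (σ * mpsProd A j).trace
      = (σ * ∑ j : Fin m → Fin d, p j • mpsProd A j).trace := by
  rw [Matrix.mul_sum, Matrix.trace_sum]
  congr 1; ext j
  rw [Matrix.mul_smul, Matrix.trace_smul]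
  rfl

/-- A homogeneous noncommutative polynomial `p` is central for dimension `D` if and only
if it is annihilated by every matrix product state with traceless boundary condition. -/
theorem stmt9 (d D m : ℕ) (hd : 0 < d) (hD : 0 < D)
    (p : (Fin m → Fin d) → ℂ) :
    (∀ A : Fin d → Matrix (Fin D) (Fin D) ℂ, ∃ c : ℂ,
        ∑ j : Fin m → Fin d, p j • mpsProd A j = c • (1 : Matrix (Fin D) (Fin D) ℂ))
      ↔ (∀ σ : Matrix (Fin D) (Fin D) ℂ, σ.trace = 0 →
          ∀ A : Fin d → Matrix (Fin D) (Fin D) ℂ,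
            ∑ j : Fin m → Fin d, p j * (σ * mpsProd A j).trace = 0) := by
  constructor
  · intro h σ hσ A
    obtain ⟨c, hc⟩ := h A
    rw [sum_trace_eq, hc, Matrix.mul_smul, Matrix.trace_smul, Matrix.mul_one, hσ]
    simp
  · intro h A
    apply scalar_of_traceless hD
    intro σ hσ
    rw [← sum_trace_eq]
    exact h σ hσ A
end

section
/- For bond dimension D = 1, the span of matrix product states is the symmetric subspace: the ℂ-linear span of the vectors ψ(ω, a, m) ∈ ((Fin m → Fin d) → ℂ) with ω ∈ ℂ and a : Fin d → ℂ (so ψ(ω,a,m)(i) = ω · a_{i_1}⋯a_{i_m}) equals the subspace of all v : (Fin m → Fin d) → ℂ that are invariant under permutations of the m sites, i.e., v(i ∘ π) = v(i) for every permutation π of Fin m. -/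
open Finset MvPolynomial

/-- For bond dimension `D = 1`, the span of the matrix product states
`ψ(ω,a,m)(i) = ω · a_{i_1} ⋯ a_{i_m}` equals the symmetric subspace, i.e. the set of
vectors invariant under permutations of the `m` sites. -/
theorem stmt14 (d m : ℕ) (hd : 0 < d) :
    ((Submodule.span ℂ (Set.range fun ωa : ℂ × (Fin d → ℂ) =>
        fun i : Fin m → Fin d => ωa.1 * ∏ k : Fin m, ωa.2 (i k)) :
          Submodule ℂ ((Fin m → Fin d) → ℂ)) : Set ((Fin m → Fin d) → ℂ))
      = { v : (Fin m → Fin d) → ℂ |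
          ∀ π : Equiv.Perm (Fin m), ∀ i : Fin m → Fin d, v (i ∘ π) = v i } := by
  classical
  set S : Set ((Fin m → Fin d) → ℂ) := Set.range fun ωa : ℂ × (Fin d → ℂ) =>
      fun i : Fin m → Fin d => ωa.1 * ∏ k : Fin m, ωa.2 (i k) with hS
  -- the multiset ("type") of a configuration
  set μ : (Fin m → Fin d) → (Fin d →₀ ℕ) := fun i => ∑ k : Fin m, Finsupp.single (i k) 1 with hμ
  -- equal type ⇒ related by a permutation of sites
  have key : ∀ v ∈ { v : (Fin m → Fin d) → ℂ |
      ∀ π : Equiv.Perm (Fin m), ∀ i : Fin m → Fin d, v (i ∘ π) = v i },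
      ∀ i i' : Fin m → Fin d, μ i = μ i' → v i = v i' := by
    intro v hv i i' h
    have hcard : ∀ j : Fin d, Fintype.card {k // i k = j} = Fintype.card {k // i' k = j} := by
      intro j
      have happ : ∀ (f : Fin m → Fin d), μ f j = (univ.filter fun k => f k = j).card := by
        intro f
        rw [hμ]
        simp only [Finsupp.finset_sum_apply, Finsupp.single_apply]
        rw [Finset.card_filter]
      have := congrArg (fun s => s j) h
      simp only [happ] at this
      simpa [Fintype.card_subtype] using this
    have e : ∀ j : Fin d, {k // i k = j} ≃ {k // i' k = j} :=
      fun j => Fintype.equivOfCardEq (hcard j)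
    let π : Fin m ≃ Fin m := Equiv.ofFiberEquiv e
    have hπ : ∀ k, i' (π k) = i k := fun k => Equiv.ofFiberEquiv_map e k
    have : i' ∘ π = i := funext hπ
    calc v i = v (i' ∘ π) := by rw [this]
    _ = v i' := hv π i'
  ext v
  constructor
  · -- span ⊆ symmetric
    intro hv
    have hle : Submodule.span ℂ S ≤
        { carrier := { v : (Fin m → Fin d) → ℂ |
            ∀ π : Equiv.Perm (Fin m), ∀ i : Fin m → Fin d, v (i ∘ π) = v i }
          add_mem' := fun hx hy π i => by
            simp only [Set.mem_setOf_eq] at *; simp [hx π i, hy π i]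
          zero_mem' := fun π i => rfl
          smul_mem' := fun c x hx π i => by
            simp only [Set.mem_setOf_eq] at *; simp [hx π i] } := by
      rw [Submodule.span_le]
      rintro _ ⟨⟨ω, a⟩, rfl⟩ π i
      show ω * ∏ k : Fin m, a (i (π k)) = ω * ∏ k : Fin m, a (i k)
      rw [Equiv.prod_comp π fun k => a (i k)]
    exact hle hv
  · -- symmetric ⊆ span
    intro hv
    by_contra hmem
    obtain ⟨f, hf0, hfbot⟩ := (Submodule.span ℂ S).exists_dual_map_eq_bot_of_notMem hmem inferInstance
    have hker : ∀ y ∈ Submodule.span ℂ S, f y = 0 := by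
      intro y hy
      have : f y ∈ (Submodule.span ℂ S).map f := Submodule.mem_map_of_mem hy
      rwa [hfbot, Submodule.mem_bot] at this
    set c : (Fin m → Fin d) → ℂ := fun i => f (fun j => if i = j then 1 else 0) with hc
    have hfc : ∀ x : (Fin m → Fin d) → ℂ, f x = ∑ i : Fin m → Fin d, x i * c i := by
      intro x
      rw [LinearMap.pi_apply_eq_sum_univ f x]
      simp [hc, smul_eq_mul]
    -- the polynomial
    set P : MvPolynomial (Fin d) ℂ := ∑ i : Fin m → Fin d, monomial (μ i) (c i) with hP
    have hmono : ∀ (s : Finset (Fin m)) (i : Fin m → Fin d),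
        (∏ k ∈ s, (X (i k) : MvPolynomial (Fin d) ℂ))
          = monomial (∑ k ∈ s, Finsupp.single (i k) 1) 1 := by
      intro s i
      induction s using Finset.induction with
      | empty => simp
      | insert _ _ hk ih =>
        rw [Finset.prod_insert hk, Finset.sum_insert hk, ih, X,
          MvPolynomial.monomial_mul, one_mul]
    have key2 : ∀ i : Fin m → Fin d,
        (monomial (μ i)) (c i) = C (c i) * ∏ k : Fin m, X (i k) := by
      intro i
      rw [hmono Finset.univ i, C_mul_monomial, mul_one]
    have hPeval : ∀ a : Fin d → ℂ, eval a P = 0 := by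
      intro a
      have hmemS : (fun i : Fin m → Fin d => (1 : ℂ) * ∏ k : Fin m, a (i k)) ∈ S :=
        ⟨(1, a), rfl⟩
      have h0 : f (fun i : Fin m → Fin d => (1 : ℂ) * ∏ k : Fin m, a (i k)) = 0 :=
        hker _ (Submodule.subset_span hmemS)
      rw [hfc] at h0
      simp only [one_mul] at h0
      calc eval a P = ∑ i : Fin m → Fin d, c i * ∏ k : Fin m, a (i k) := by
            rw [hP]
            rw [map_sum]
            refine Finset.sum_congr rfl fun i _ => ?_
            rw [key2 i]
            simp
      _ = 0 := by rw [← h0]; exact Finset.sum_congr rfl fun i _ => mul_comm _ _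
    have hP0 : P = 0 := by
      apply MvPolynomial.funext
      intro x; rw [hPeval x]; simp
    have hcoeff : ∀ b : Fin d →₀ ℕ,
        ∑ i ∈ univ.filter (fun i : Fin m → Fin d => μ i = b), c i = 0 := by
      intro b
      have := congrArg (MvPolynomial.coeff b) hP0
      rw [hP] at this
      simp only [MvPolynomial.coeff_sum, MvPolynomial.coeff_monomial,
        MvPolynomial.coeff_zero] at this
      rw [Finset.sum_filter]
      exact this
    -- conclude f v = 0, contradiction
    apply hf0
    rw [hfc v]
    rw [← Finset.sum_fiberwise_of_maps_to (g := μ) (t := univ.image μ)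
      (fun i _ => Finset.mem_image_of_mem μ (Finset.mem_univ i)) (fun i => v i * c i)]
    refine Finset.sum_eq_zero fun b hb => ?_
    obtain ⟨i0, _, hi0⟩ := Finset.mem_image.mp hb
    have : ∀ i ∈ univ.filter (fun i : Fin m → Fin d => μ i = b), v i * c i = v i0 * c i := by
      intro i hi
      rw [Finset.mem_filter] at hi
      rw [key v hv i i0 (by rw [hi.2, hi0])]
    rw [Finset.sum_congr rfl this, ← Finset.mul_sum, hcoeff b, mul_zero]
end

section
/- Every vector in (ℂ^d)^{⊗m} is a matrix product state for sufficiently large bond dimension: for every v : (Fin m → Fin d) → ℂ there exist a bond dimension D, a boundary condition ω ∈ M_D(ℂ) and matrices A : Fin d → M_D(ℂ) such that v(i_1,…,i_m) = tr(ω · A_{i_1}⋯A_{i_m}) for all (i_1,…,i_m); moreover one may take D = d^m. -/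
open Matrix

namespace MPSAux

open Fin.CommRing

variable {d m : ℕ} [NeZero m]

/-- Cyclic shift on strings. -/
def shift (s : Fin m → Fin d) : Fin m → Fin d := fun j => s (j + 1)

lemma shift_iter (k : ℕ) (s : Fin m → Fin d) (j : Fin m) :
    shift^[k] s j = s (j + (k : Fin m)) := by
  induction k generalizing s with
  | zero => simp
  | succ k ih =>
      rw [Function.iterate_succ_apply, ih]
      show s ((j + (k : Fin m)) + 1) = _
      congr 1
      push_cast
      ring

lemma shift_iter_self (s : Fin m → Fin d) : shift^[m] s = s := by
  funext j
  rw [shift_iter]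
  simp

/-- First `n` letters of a string, read with cyclic shifts. -/
def word : ℕ → (Fin m → Fin d) → List (Fin d)
  | 0, _ => []
  | n + 1, s => s 0 :: word n (shift s)

lemma word_eq (n : ℕ) (s : Fin m → Fin d) :
    word n s = List.ofFn (fun j : Fin n => shift^[(j : ℕ)] s 0) := by
  induction n generalizing s with
  | zero => simp [word]
  | succ n ih =>
      rw [List.ofFn_succ]
      simp only [word, ih, Function.iterate_succ_apply]
      rfl

/-- The transfer matrix of the letter `k`. -/
def Amat (k : Fin d) : Matrix (Fin m → Fin d) (Fin m → Fin d) ℂ :=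
  Matrix.of fun s t => if s 0 = k ∧ t = shift s then 1 else 0

lemma prod_apply (l : List (Fin d)) (s s' : Fin m → Fin d) :
    ((l.map (Amat (m := m))).prod) s s'
      = if word l.length s = l ∧ s' = shift^[l.length] s then 1 else 0 := by
  induction l generalizing s with
  | nil =>
      simp only [List.map_nil, List.prod_nil, List.length_nil, word, Function.iterate_zero,
        id_eq, Matrix.one_apply, true_and]
      by_cases h : s = s'
      · simp [h]
      · rw [if_neg h, if_neg (fun hh => h hh.symm)]
  | cons k l ih =>
      rw [List.map_cons, List.prod_cons, Matrix.mul_apply]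
      rw [Fintype.sum_eq_single (shift s) (fun t ht => by
        simp only [Amat, Matrix.of_apply]
        rw [if_neg (fun h => ht h.2), zero_mul])]
      rw [ih]
      simp only [Amat, Matrix.of_apply, List.length_cons, word,
        Function.iterate_succ_apply, and_true, List.cons_eq_cons]
      split_ifs with h1 h2 h3 h3 <;> simp_all

end MPSAux

/-- Every vector of `(ℂ^d)^{⊗m}` is a matrix product state for sufficiently large bond
dimension; one may take the bond dimension `D = d^m`. -/
theorem stmt15 (d m : ℕ) (hd : 0 < d) (v : (Fin m → Fin d) → ℂ) :
    ∃ D : ℕ, D = d ^ m ∧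
      ∃ (ω : Matrix (Fin D) (Fin D) ℂ) (A : Fin d → Matrix (Fin D) (Fin D) ℂ),
        ∀ i : Fin m → Fin d, v i = (ω * mpsProd A i).trace := by
  match m with
  | 0 =>
      refine ⟨1, by simp, Matrix.of (fun _ _ => v (fun j => j.elim0)), fun _ => 1, fun i => ?_⟩
      have hi : i = fun j => j.elim0 := by funext j; exact j.elim0
      simp [mpsProd, Matrix.trace, Matrix.diag, hi]
  | m + 1 =>
      have : NeZero (m + 1) := ⟨Nat.succ_ne_zero m⟩
      have hcard : Fintype.card (Fin (m + 1) → Fin d) = d ^ (m + 1) := by simp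
      let e : (Fin (m + 1) → Fin d) ≃ Fin (d ^ (m + 1)) := Fintype.equivFinOfCardEq hcard
      let φ := Matrix.reindexAlgEquiv ℂ ℂ e
      refine ⟨d ^ (m + 1), rfl, φ (Matrix.diagonal v), fun k => φ (MPSAux.Amat k), fun i => ?_⟩
      have hprod : mpsProd (fun k => φ (MPSAux.Amat k)) i
          = φ (((List.finRange (m + 1)).map fun t => MPSAux.Amat (i t)).prod) := by
        rw [mpsProd, map_list_prod, List.map_map]
        rfl
      rw [hprod, ← _root_.map_mul φ]
      have htr : ∀ X : Matrix (Fin (m + 1) → Fin d) (Fin (m + 1) → Fin d) ℂ, (φ X).trace = X.trace := by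
        intro X
        simp only [φ, Matrix.reindexAlgEquiv_apply, Matrix.reindex_apply, Matrix.trace,
          Matrix.diag, Matrix.submatrix_apply]
        exact Fintype.sum_equiv e.symm _ _ (fun j => rfl)
      rw [htr]
      have hM : ((List.finRange (m + 1)).map fun t => MPSAux.Amat (i t))
          = ((List.finRange (m + 1)).map i).map (MPSAux.Amat (m := (m + 1))) := by rw [List.map_map]; rfl
      rw [hM]
      rw [Matrix.trace]
      have hdiag : ∀ s, (Matrix.diagonal v * (((List.finRange (m + 1)).map i).map (MPSAux.Amat (m := (m + 1)))).prod).diag s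
          = if s = i then v s else 0 := by
        intro s
        rw [Matrix.diag_apply, Matrix.diagonal_mul, MPSAux.prod_apply]
        have hlen : ((List.finRange (m + 1)).map i).length = (m + 1) := by simp
        rw [hlen, MPSAux.shift_iter_self]
        have hword : (MPSAux.word (m + 1) s = (List.finRange (m + 1)).map i) ↔ s = i := by
          rw [MPSAux.word_eq, ← List.ofFn_eq_map]
          rw [List.ofFn_inj]
          constructor
          · intro h
            funext j
            have := congrFun h j
            rwa [MPSAux.shift_iter, zero_add, Fin.cast_val_eq_self] at this
          · intro h
            subst h
            funext j
            rw [MPSAux.shift_iter, zero_add, Fin.cast_val_eq_self]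
        simp [hword]
      rw [Finset.sum_congr rfl (fun s _ => hdiag s)]
      simp
end
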